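/- Let 1 ≤ r ≤ ∞. There exists a constant C > 0 such that for every t > 0, ‖ δ⁺G_{t,1} ‖_{ℓ^r(ℤ)} ≤ C · t^{−1/2 − (1 − 1/r)/2}, where δ⁺g(n) = g(n+1) − g(n). -/

import Mathlib

open scoped ENNReal

/-- The modified Bessel function of the first kind of integer order `m`. -/
noncomputable def besselIZ (m : ℤ) (t : ℝ) : ℝ :=
  (1 / Real.pi) * ∫ θ in (0 : ℝ)..Real.pi, Real.exp (t * Real.cos θ) * Real.cos ((m : ℝ) * θ)

/-- The one-dimensional discrete heat kernel. -/
noncomputable def heatKernel1 (t : ℝ) (n : ℤ) : ℝ := Real.exp (-2 * t) * besselIZ n (2 * t)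

/-- The `ℓ^p` norm (valued in `ℝ≥0∞`) of a sequence, `1 ≤ p ≤ ∞`. -/
noncomputable def lpNorm {ι : Type*} (p : ℝ≥0∞) (f : ι → ℝ) : ℝ≥0∞ :=
  if p = ∞ then ⨆ n, (‖f n‖₊ : ℝ≥0∞)
  else (∑' n, (‖f n‖₊ : ℝ≥0∞) ^ p.toReal) ^ (1 / p.toReal)

open Real intervalIntegral

noncomputable def hh (t θ : ℝ) : ℝ := exp (2*t*cos θ) * sin (θ/2)
noncomputable def hh1 (t θ : ℝ) : ℝ := exp (2*t*cos θ) * (cos (θ/2)/2 - 2*t*sin θ*sin (θ/2))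
noncomputable def hh2 (t θ : ℝ) : ℝ := exp (2*t*cos θ) *
  ((-(2*t*sin θ)) * (cos (θ/2)/2 - 2*t*sin θ*sin (θ/2))
    + (-(sin (θ/2))/4 - 2*t*(cos θ*sin (θ/2) + sin θ*(cos (θ/2)/2))))

lemma hasDerivAt_hh (t θ : ℝ) : HasDerivAt (hh t) (hh1 t θ) θ := by
  have h1 : HasDerivAt (fun θ : ℝ => 2*t*cos θ) (2*t*(-sin θ)) θ :=
    (Real.hasDerivAt_cos θ).const_mul (2*t)
  have h2 : HasDerivAt (fun θ : ℝ => exp (2*t*cos θ)) (exp (2*t*cos θ) * (2*t*(-sin θ))) θ := by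
    simpa [mul_comm] using h1.exp
  have h3 : HasDerivAt (fun θ : ℝ => sin (θ/2)) (cos (θ/2) * (1/2)) θ := by
    simpa using ((hasDerivAt_id' θ).div_const 2).sin
  have := h2.fun_mul h3
  refine this.congr_deriv ?_
  unfold hh1; ring

lemma hasDerivAt_hh1 (t θ : ℝ) : HasDerivAt (hh1 t) (hh2 t θ) θ := by
  have h1 : HasDerivAt (fun θ : ℝ => 2*t*cos θ) (2*t*(-sin θ)) θ :=
    (Real.hasDerivAt_cos θ).const_mul (2*t)
  have h2 : HasDerivAt (fun θ : ℝ => exp (2*t*cos θ)) (exp (2*t*cos θ) * (2*t*(-sin θ))) θ := by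
    simpa [mul_comm] using h1.exp
  have h3 : HasDerivAt (fun θ : ℝ => sin (θ/2)) (cos (θ/2) * (1/2)) θ := by
    simpa using ((hasDerivAt_id' θ).div_const 2).sin
  have h4 : HasDerivAt (fun θ : ℝ => cos (θ/2)) (-sin (θ/2) * (1/2)) θ := by
    simpa using ((hasDerivAt_id' θ).div_const 2).cos
  have h5 : HasDerivAt (fun θ : ℝ => cos (θ/2)/2 - 2*t*sin θ*sin (θ/2))
      (-sin (θ/2)*(1/2)/2 - ((2*t*cos θ)*sin (θ/2) + 2*t*sin θ*(cos (θ/2)*(1/2)))) θ := by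
    have hs : HasDerivAt (fun θ : ℝ => 2*t*sin θ) (2*t*cos θ) θ := by
      simpa [mul_comm] using (Real.hasDerivAt_sin θ).const_mul (2*t)
    simpa using (h4.div_const 2).fun_sub (hs.fun_mul h3)
  have := h2.fun_mul h5
  refine this.congr_deriv ?_
  unfold hh2; ring

lemma cont_hh (t : ℝ) : Continuous (hh t) := by unfold hh; fun_prop

lemma cont_hh1 (t : ℝ) : Continuous (hh1 t) := by unfold hh1; fun_prop

lemma cont_hh2 (t : ℝ) : Continuous (hh2 t) := by unfold hh2; fun_prop

lemma ibp (t : ℝ) (n : ℕ) :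
    ∫ θ in (0:ℝ)..π, hh t θ * sin (((n:ℝ)+1/2)*θ) =
      -(1/((n:ℝ)+1/2)^2) * ∫ θ in (0:ℝ)..π, hh2 t θ * sin (((n:ℝ)+1/2)*θ) := by
  set ν : ℝ := (n:ℝ)+1/2 with hν
  have hν0 : ν ≠ 0 := by positivity
  set Φ : ℝ → ℝ := fun θ => -(hh t θ * cos (ν*θ) / ν) + hh1 t θ * sin (ν*θ) / ν^2 with hΦ
  have hder : ∀ θ ∈ Set.uIcc (0:ℝ) π, HasDerivAt Φ
      (hh t θ * sin (ν*θ) + (1/ν^2) * (hh2 t θ * sin (ν*θ))) θ := by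
    intro θ _
    have hc : HasDerivAt (fun θ : ℝ => cos (ν*θ)) (-sin (ν*θ) * ν) θ := by
      simpa using ((hasDerivAt_id' θ).const_mul ν).cos
    have hs : HasDerivAt (fun θ : ℝ => sin (ν*θ)) (cos (ν*θ) * ν) θ := by
      simpa using ((hasDerivAt_id' θ).const_mul ν).sin
    have h1 := (((hasDerivAt_hh t θ).fun_mul hc).div_const ν).fun_neg
    have h2 := (((hasDerivAt_hh1 t θ).fun_mul hs).div_const (ν^2))
    have h12 := h1.fun_add h2
    refine h12.congr_deriv ?_
    field_simp
    ring
  have hint : IntervalIntegrable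
      (fun θ => hh t θ * sin (ν*θ) + (1/ν^2) * (hh2 t θ * sin (ν*θ))) MeasureTheory.volume 0 π := by
    apply Continuous.intervalIntegrable
    exact ((cont_hh t).mul (by fun_prop)).add (continuous_const.mul ((cont_hh2 t).mul (by fun_prop)))
  have key := intervalIntegral.integral_eq_sub_of_hasDerivAt hder hint
  have hcos : cos (ν*π) = 0 := by
    have : ν*π = (n:ℝ)*π + π/2 := by rw [hν]; ring
    rw [this, Real.cos_add, Real.cos_pi_div_two, Real.sin_pi_div_two, Real.sin_nat_mul_pi]
    ring
  have hΦπ : Φ π = 0 := by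
    simp only [hΦ, hcos]
    have : hh1 t π = 0 := by
      unfold hh1; simp [Real.cos_pi_div_two]
    simp [this, Real.sin_pi]
  have hΦ0 : Φ 0 = 0 := by
    simp [hΦ, hh]
  rw [hΦπ, hΦ0, sub_zero] at key
  rw [intervalIntegral.integral_add (f := fun θ => hh t θ * sin (ν*θ)) (g := fun θ => 1/ν^2 * (hh2 t θ * sin (ν*θ)))
      (((cont_hh t).mul (by fun_prop : Continuous fun θ:ℝ => sin (ν*θ))).intervalIntegrable 0 π)
      ((continuous_const.mul ((cont_hh2 t).mul (by fun_prop : Continuous fun θ:ℝ => sin (ν*θ)))).intervalIntegrable 0 π)] at key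
  rw [intervalIntegral.integral_const_mul] at key
  linarith [key]

lemma intJ1 {a : ℝ} (ha : 0 < a) : ∫ θ in (0:ℝ)..π, exp (-(a*θ^2)) * θ ≤ 1/(2*a) := by
  have hder : ∀ θ ∈ Set.uIcc (0:ℝ) π,
      HasDerivAt (fun θ : ℝ => -exp (-(a*θ^2))/(2*a)) (exp (-(a*θ^2)) * θ) θ := by
    intro θ _
    have h1 : HasDerivAt (fun θ : ℝ => -(a*θ^2)) (-(a*(2*θ))) θ := by
      simpa using ((hasDerivAt_pow 2 θ).const_mul a).fun_neg
    have := (h1.exp.fun_neg).div_const (2*a)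
    refine this.congr_deriv ?_
    field_simp
  have hint : IntervalIntegrable (fun θ : ℝ => exp (-(a*θ^2)) * θ) MeasureTheory.volume 0 π :=
    (by fun_prop : Continuous fun θ : ℝ => exp (-(a*θ^2)) * θ).intervalIntegrable 0 π
  rw [intervalIntegral.integral_eq_sub_of_hasDerivAt hder hint]
  have h1 : 0 < exp (-(a*π^2)) := exp_pos _
  have h2 : exp (-(a*0^2)) = 1 := by norm_num
  rw [h2]
  have e : -exp (-(a*π^2))/(2*a) - -1/(2*a) = (1 - exp (-(a*π^2)))/(2*a) := by ring
  rw [e]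
  gcongr
  all_goals linarith [exp_pos (-(a*π^2))]

lemma intJ3 {a : ℝ} (ha : 0 < a) : ∫ θ in (0:ℝ)..π, exp (-(a*θ^2)) * θ^3 ≤ 1/(2*a^2) := by
  have hder : ∀ θ ∈ Set.uIcc (0:ℝ) π,
      HasDerivAt (fun θ : ℝ => -((a*θ^2+1) * exp (-(a*θ^2)))/(2*a^2)) (exp (-(a*θ^2)) * θ^3) θ := by
    intro θ _
    have h1 : HasDerivAt (fun θ : ℝ => -(a*θ^2)) (-(a*(2*θ))) θ := by
      simpa using ((hasDerivAt_pow 2 θ).const_mul a).fun_neg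
    have h2 : HasDerivAt (fun θ : ℝ => a*θ^2+1) (a*(2*θ)) θ := by
      simpa using ((hasDerivAt_pow 2 θ).const_mul a).add_const 1
    have := ((h2.fun_mul h1.exp).fun_neg).div_const (2*a^2)
    refine this.congr_deriv ?_
    field_simp
    ring
  have hint : IntervalIntegrable (fun θ : ℝ => exp (-(a*θ^2)) * θ^3) MeasureTheory.volume 0 π :=
    (by fun_prop : Continuous fun θ : ℝ => exp (-(a*θ^2)) * θ^3).intervalIntegrable 0 π
  rw [intervalIntegral.integral_eq_sub_of_hasDerivAt hder hint]
  have h2 : exp (-(a*0^2)) = 1 := by norm_num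
  rw [h2]
  have e : -((a*π^2+1) * exp (-(a*π^2)))/(2*a^2) - -((a*0^2+1)*1)/(2*a^2)
      = (1 - (a*π^2+1) * exp (-(a*π^2)))/(2*a^2) := by ring
  rw [e]
  gcongr
  all_goals nlinarith [mul_nonneg (by positivity : (0:ℝ) ≤ a*π^2+1) (exp_pos (-(a*π^2))).le]

lemma intJ0 {a : ℝ} (ha : 0 < a) : ∫ θ in (0:ℝ)..π, exp (-(a*θ^2)) ≤ (π/2)/Real.sqrt a := by
  have hsa : 0 < Real.sqrt a := Real.sqrt_pos.mpr ha
  have hmono : ∫ θ in (0:ℝ)..π, exp (-(a*θ^2)) ≤ ∫ θ in (0:ℝ)..π, (1+a*θ^2)⁻¹ := by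
    apply intervalIntegral.integral_mono_on pi_pos.le
    · exact (by fun_prop : Continuous fun θ : ℝ => exp (-(a*θ^2))).intervalIntegrable 0 π
    · exact (Continuous.intervalIntegrable (by
        apply Continuous.inv₀ (by fun_prop)
        intro θ; positivity) 0 π)
    · intro θ hθ
      have h1 : 0 < 1 + a*θ^2 := by positivity
      rw [Real.exp_neg, inv_le_inv₀ (exp_pos _) h1]
      linarith [Real.add_one_le_exp (a*θ^2)]
  refine hmono.trans ?_
  have hder : ∀ θ ∈ Set.uIcc (0:ℝ) π,
      HasDerivAt (fun θ : ℝ => Real.arctan (Real.sqrt a * θ) / Real.sqrt a) ((1+a*θ^2)⁻¹) θ := by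
    intro θ _
    have h1 : HasDerivAt (fun θ : ℝ => Real.sqrt a * θ) (Real.sqrt a) θ := by
      simpa using (hasDerivAt_id θ).const_mul (Real.sqrt a)
    have h2 := h1.arctan
    have := h2.div_const (Real.sqrt a)
    refine this.congr_deriv ?_
    have hsq : Real.sqrt a ^ 2 = a := Real.sq_sqrt ha.le
    field_simp
    nlinarith [hsq]
  have hint : IntervalIntegrable (fun θ : ℝ => (1+a*θ^2)⁻¹) MeasureTheory.volume 0 π :=
    (Continuous.intervalIntegrable (by
        apply Continuous.inv₀ (by fun_prop)
        intro θ; positivity) 0 π)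
  rw [intervalIntegral.integral_eq_sub_of_hasDerivAt hder hint]
  simp only [mul_zero, Real.arctan_zero, zero_div, sub_zero]
  rw [div_le_div_iff₀ hsa hsa]
  nlinarith [Real.arctan_lt_pi_div_two (Real.sqrt a * π), hsa]

lemma hrepr (t : ℝ) (n : ℕ) :
    heatKernel1 t ((n:ℤ)+1) - heatKernel1 t n =
    -(2/π) * exp (-2*t) * ∫ θ in (0:ℝ)..π, hh t θ * sin (((n:ℝ)+1/2)*θ) := by
  unfold heatKernel1 besselIZ
  have hcast1 : ((((n:ℤ)+1 : ℤ)) : ℝ) = (n:ℝ)+1 := by push_cast; ring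
  have hcast2 : (((n:ℤ)) : ℝ) = (n:ℝ) := by push_cast; ring
  rw [hcast1, hcast2]
  have hpt : ∀ θ:ℝ, exp (2*t*cos θ) * cos (((n:ℝ)+1)*θ) - exp (2*t*cos θ) * cos ((n:ℝ)*θ)
      = (-2) * (hh t θ * sin (((n:ℝ)+1/2)*θ)) := by
    intro θ
    rw [← mul_sub, Real.cos_sub_cos]
    have e1 : (((n:ℝ)+1)*θ + (n:ℝ)*θ)/2 = ((n:ℝ)+1/2)*θ := by ring
    have e2 : (((n:ℝ)+1)*θ - (n:ℝ)*θ)/2 = θ/2 := by ring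
    rw [e1, e2]
    unfold hh
    ring
  have hsub : (∫ θ in (0:ℝ)..π, exp (2*t*cos θ) * cos (((n:ℝ)+1)*θ))
      - (∫ θ in (0:ℝ)..π, exp (2*t*cos θ) * cos ((n:ℝ)*θ))
      = (-2) * ∫ θ in (0:ℝ)..π, hh t θ * sin (((n:ℝ)+1/2)*θ) := by
    rw [← intervalIntegral.integral_sub
      ((by fun_prop : Continuous fun θ:ℝ => exp (2*t*cos θ) * cos (((n:ℝ)+1)*θ)).intervalIntegrable 0 π)
      ((by fun_prop : Continuous fun θ:ℝ => exp (2*t*cos θ) * cos ((n:ℝ)*θ)).intervalIntegrable 0 π)]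
    rw [intervalIntegral.integral_congr (fun θ _ => hpt θ)]
    rw [intervalIntegral.integral_const_mul]
  linear_combination (exp (-2*t)/π) * hsub

lemma expdecay {t θ : ℝ} (ht : 0 < t) (h0 : 0 ≤ θ) (h1 : θ ≤ π) :
    exp (-2*t) * exp (2*t*cos θ) ≤ exp (-((4*t/π^2)*θ^2)) := by
  rw [← Real.exp_add]
  apply Real.exp_le_exp.mpr
  have hs : θ/π ≤ sin (θ/2) := by
    have := Real.mul_le_sin (x := θ/2) (by linarith) (by linarith)
    calc θ/π = 2/π * (θ/2) := by ring
    _ ≤ sin (θ/2) := this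
  have hcos : cos θ = 1 - 2 * sin (θ/2)^2 := by
    have := Real.sin_sq_eq_half_sub (θ/2)
    rw [show 2*(θ/2) = θ by ring] at this
    linarith
  have hθπ : 0 ≤ θ/π := by positivity
  have hsq : (θ/π)^2 ≤ sin (θ/2)^2 := by
    apply sq_le_sq' <;> nlinarith
  rw [hcos]
  rw [show (θ/π)^2 = θ^2/π^2 by ring] at hsq
  have h : 4*t/π^2*θ^2 ≤ 4*t*sin (θ/2)^2 := by
    calc 4*t/π^2*θ^2 = 4*t*(θ^2/π^2) := by ring
      _ ≤ 4*t*sin (θ/2)^2 := mul_le_mul_of_nonneg_left hsq (by positivity)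
  linarith [h]

lemma ihh (t : ℝ) (ht : 0 < t) :
    exp (-2*t) * ∫ θ in (0:ℝ)..π, |hh t θ| ≤ π^2/(16*t) := by
  have ha : 0 < 4*t/π^2 := by positivity
  rw [← intervalIntegral.integral_const_mul]
  have hmono : ∫ θ in (0:ℝ)..π, exp (-2*t) * |hh t θ|
      ≤ ∫ θ in (0:ℝ)..π, exp (-((4*t/π^2)*θ^2)) * (θ/2) := by
    apply intervalIntegral.integral_mono_on pi_pos.le
    · exact (continuous_const.mul (cont_hh t).abs).intervalIntegrable 0 π
    · exact (by fun_prop : Continuous fun θ:ℝ => exp (-((4*t/π^2)*θ^2)) * (θ/2)).intervalIntegrable 0 π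
    · intro θ hθ
      obtain ⟨h0, h1⟩ := hθ
      have hsθ : 0 ≤ sin (θ/2) := Real.sin_nonneg_of_nonneg_of_le_pi (by linarith) (by linarith)
      have habs : |hh t θ| = exp (2*t*cos θ) * sin (θ/2) := by
        unfold hh
        rw [abs_of_nonneg (by positivity)]
      rw [habs]
      have hb : sin (θ/2) ≤ θ/2 := by
        have := Real.sin_le (by linarith : 0 ≤ θ/2)
        linarith
      calc exp (-2*t) * (exp (2*t*cos θ) * sin (θ/2))
          = (exp (-2*t) * exp (2*t*cos θ)) * sin (θ/2) := by ring
        _ ≤ exp (-((4*t/π^2)*θ^2)) * sin (θ/2) :=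
            mul_le_mul_of_nonneg_right (expdecay ht h0 h1) hsθ
        _ ≤ exp (-((4*t/π^2)*θ^2)) * (θ/2) := by
            apply mul_le_mul_of_nonneg_left hb (exp_pos _).le
  refine hmono.trans ?_
  have h2 : ∫ θ in (0: ℝ)..π, exp (-((4*t/π^2)*θ^2)) * (θ/2)
      = (1/2) * ∫ θ in (0:ℝ)..π, exp (-((4*t/π^2)*θ^2)) * θ := by
    rw [← intervalIntegral.integral_const_mul]
    apply intervalIntegral.integral_congr
    intro θ _; ring
  rw [h2]
  have := intJ1 ha
  calc (1/2) * ∫ θ in (0:ℝ)..π, exp (-((4*t/π^2)*θ^2)) * θ ≤ (1/2) * (1/(2*(4*t/π^2))) := by linarith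
    _ = π^2/(16*t) := by field_simp; ring

set_option maxHeartbeats 2000000 in
lemma hh2_ptbound {t θ : ℝ} (ht : 0 < t) (h0 : 0 ≤ θ) (h1 : θ ≤ π) :
    exp (-2*t) * |hh2 t θ| ≤
      exp (-((4*t/π^2)*θ^2)) * (1/4) + 5*t*(exp (-((4*t/π^2)*θ^2)) * θ)
        + 2*t^2*(exp (-((4*t/π^2)*θ^2)) * θ^3) := by
  set s := sin (θ/2) with hsdef
  set c := cos (θ/2) with hcdef
  have hs0 : 0 ≤ s := Real.sin_nonneg_of_nonneg_of_le_pi (by linarith) (by linarith)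
  have hs1 : s ≤ θ/2 := by
    have := Real.sin_le (by linarith : 0 ≤ θ/2); linarith
  have hc2 : c^2 ≤ 1 := by
    have := Real.sin_sq_add_cos_sq (θ/2); nlinarith [sq_nonneg s]
  have hsinθ : sin θ = 2*s*c := by
    rw [show θ = 2*(θ/2) by ring, Real.sin_two_mul]
  have hcosθ : cos θ = 1 - 2*s^2 := by
    rw [show θ = 2*(θ/2) by ring, Real.cos_two_mul']
    nlinarith [Real.sin_sq_add_cos_sq (θ/2)]
  have hs2 : s ≤ 1 := Real.sin_le_one _
  have hinner : |((-(2*t*sin θ)) * (c/2 - 2*t*sin θ*s)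
      + (-s/4 - 2*t*(cos θ*s + sin θ*(c/2))))| ≤ 1/4 + 10*t*s + 16*t^2*s^3 := by
    rw [hsinθ, hcosθ]
    have e1 : t*s*c^2 ≤ t*s := by nlinarith [mul_nonneg ht.le hs0]
    have e2 : t^2*s^3*c^2 ≤ t^2*s^3 := by
      nlinarith [mul_nonneg (sq_nonneg t) (pow_nonneg hs0 3)]
    have e3 : s^3 ≤ s := by nlinarith
    have e4 : t*s^3 ≤ t*s := by nlinarith [mul_nonneg ht.le (by nlinarith : (0:ℝ) ≤ s - s^3)]
    have e5 : 0 ≤ t*s*c^2 := mul_nonneg (mul_nonneg ht.le hs0) (sq_nonneg c)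
    have e6 : 0 ≤ t^2*s^3*c^2 := mul_nonneg (mul_nonneg (sq_nonneg t) (pow_nonneg hs0 3)) (sq_nonneg c)
    have e7 : 0 ≤ t*s := mul_nonneg ht.le hs0
    have e8 : 0 ≤ t^2*s^3 := mul_nonneg (sq_nonneg t) (pow_nonneg hs0 3)
    have e9 : 0 ≤ t*s^3 := mul_nonneg ht.le (pow_nonneg hs0 3)
    rw [abs_le]
    constructor <;> nlinarith [e1, e2, e4, e5, e6, e7, e8, e9, hs0, hs2]
  have habs : |hh2 t θ| = exp (2*t*cos θ) * |((-(2*t*sin θ)) * (c/2 - 2*t*sin θ*s)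
      + (-s/4 - 2*t*(cos θ*s + sin θ*(c/2))))| := by
    unfold hh2
    rw [abs_mul, abs_of_pos (exp_pos _)]
  have hE : 0 < exp (2*t*cos θ) := exp_pos _
  have hstep : exp (-2*t) * |hh2 t θ|
      ≤ exp (-((4*t/π^2)*θ^2)) * (1/4 + 10*t*s + 16*t^2*s^3) := by
    rw [habs]
    calc exp (-2*t) * (exp (2*t*cos θ) * |_root_.id (((-(2*t*sin θ)) * (c/2 - 2*t*sin θ*s)
          + (-s/4 - 2*t*(cos θ*s + sin θ*(c/2)))))|)
        = (exp (-2*t) * exp (2*t*cos θ)) * |(((-(2*t*sin θ)) * (c/2 - 2*t*sin θ*s)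
          + (-s/4 - 2*t*(cos θ*s + sin θ*(c/2)))))| := by simp [_root_.id]; ring
      _ ≤ exp (-((4*t/π^2)*θ^2)) * (1/4 + 10*t*s + 16*t^2*s^3) := by
          apply mul_le_mul (expdecay ht h0 h1) hinner (abs_nonneg _) (exp_pos _).le
  refine hstep.trans ?_
  have hmono : 1/4 + 10*t*s + 16*t^2*s^3 ≤ 1/4 + 5*t*θ + 2*t^2*θ^3 := by
    have h3 : s^3 ≤ (θ/2)^3 := by
      apply pow_le_pow_left₀ hs0 hs1
    nlinarith [mul_le_mul_of_nonneg_left hs1 (by positivity : (0:ℝ) ≤ 10*t),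
      mul_le_mul_of_nonneg_left h3 (by positivity : (0:ℝ) ≤ 16*t^2)]
  calc exp (-((4*t/π^2)*θ^2)) * (1/4 + 10*t*s + 16*t^2*s^3)
      ≤ exp (-((4*t/π^2)*θ^2)) * (1/4 + 5*t*θ + 2*t^2*θ^3) :=
        mul_le_mul_of_nonneg_left hmono (exp_pos _).le
    _ = exp (-((4*t/π^2)*θ^2)) * (1/4) + 5*t*(exp (-((4*t/π^2)*θ^2)) * θ)
        + 2*t^2*(exp (-((4*t/π^2)*θ^2)) * θ^3) := by ring

lemma ihh2 (t : ℝ) (ht : 0 < t) :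
    exp (-2*t) * ∫ θ in (0:ℝ)..π, |hh2 t θ| ≤ t^(-(1/2):ℝ) + 13 := by
  have ha : 0 < 4*t/π^2 := by positivity
  rw [← intervalIntegral.integral_const_mul]
  set a := 4*t/π^2 with hadef
  have hmono : ∫ θ in (0:ℝ)..π, exp (-2*t) * |hh2 t θ|
      ≤ ∫ θ in (0:ℝ)..π, (exp (-(a*θ^2)) * (1/4) + 5*t*(exp (-(a*θ^2)) * θ)
        + 2*t^2*(exp (-(a*θ^2)) * θ^3)) := by
    apply intervalIntegral.integral_mono_on pi_pos.le
    · exact (continuous_const.mul (cont_hh2 t).abs).intervalIntegrable 0 π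
    · exact (by fun_prop : Continuous fun θ:ℝ => (exp (-(a*θ^2)) * (1/4) + 5*t*(exp (-(a*θ^2)) * θ)
        + 2*t^2*(exp (-(a*θ^2)) * θ^3))).intervalIntegrable 0 π
    · intro θ hθ
      exact hh2_ptbound ht hθ.1 hθ.2
  refine hmono.trans ?_
  have hsplit : ∫ θ in (0:ℝ)..π, (exp (-(a*θ^2)) * (1/4) + 5*t*(exp (-(a*θ^2)) * θ)
        + 2*t^2*(exp (-(a*θ^2)) * θ^3))
      = (∫ θ in (0:ℝ)..π, exp (-(a*θ^2)) * (1/4))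
        + (∫ θ in (0:ℝ)..π, 5*t*(exp (-(a*θ^2)) * θ))
        + (∫ θ in (0:ℝ)..π, 2*t^2*(exp (-(a*θ^2)) * θ^3)) := by
    rw [intervalIntegral.integral_add, intervalIntegral.integral_add]
    all_goals apply Continuous.intervalIntegrable; fun_prop
  rw [hsplit]
  have h0' : (∫ θ in (0:ℝ)..π, exp (-(a*θ^2)) * (1/4)) ≤ π^2/16 * t^(-(1/2):ℝ) := by
    rw [intervalIntegral.integral_mul_const]
    have := intJ0 ha
    have hsqa : Real.sqrt a = 2*Real.sqrt t/π := by
      rw [hadef, show 4*t/π^2 = (2*Real.sqrt t/π)^2 by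
        rw [div_pow, mul_pow, Real.sq_sqrt ht.le]; norm_num]
      exact Real.sqrt_sq (by positivity)
    rw [hsqa] at this
    have hrt : t^(-(1/2):ℝ) = (Real.sqrt t)⁻¹ := by
      rw [Real.rpow_neg ht.le, ← Real.sqrt_eq_rpow]
    have hst : 0 < Real.sqrt t := Real.sqrt_pos.mpr ht
    calc (∫ θ in (0:ℝ)..π, exp (-(a*θ^2))) * (1/4)
        ≤ ((π/2)/(2*Real.sqrt t/π)) * (1/4) := by
          apply mul_le_mul_of_nonneg_right this (by norm_num)
      _ = π^2/16 * (Real.sqrt t)⁻¹ := by field_simp; ring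
      _ = π^2/16 * t^(-(1/2):ℝ) := by rw [hrt]
  have h1' : (∫ θ in (0:ℝ)..π, 5*t*(exp (-(a*θ^2)) * θ)) ≤ 5*π^2/8 := by
    rw [intervalIntegral.integral_const_mul]
    have := intJ1 ha
    calc 5*t*(∫ θ in (0:ℝ)..π, exp (-(a*θ^2)) * θ) ≤ 5*t*(1/(2*a)) := by
          apply mul_le_mul_of_nonneg_left this (by positivity)
      _ = 5*π^2/8 := by rw [hadef]; field_simp; ring
  have h3' : (∫ θ in (0:ℝ)..π, 2*t^2*(exp (-(a*θ^2)) * θ^3)) ≤ π^4/16 := by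
    rw [intervalIntegral.integral_const_mul]
    have := intJ3 ha
    calc 2*t^2*(∫ θ in (0:ℝ)..π, exp (-(a*θ^2)) * θ^3) ≤ 2*t^2*(1/(2*a^2)) := by
          apply mul_le_mul_of_nonneg_left this (by positivity)
      _ = π^4/16 := by rw [hadef]; field_simp; ring
  have hpi2 : π^2 ≤ 9.9225 := by nlinarith [Real.pi_lt_d2, Real.pi_gt_three]
  have hpi4 : π^4 ≤ 98.46 := by nlinarith [hpi2, Real.pi_gt_three]
  have hrtpos : 0 < t^(-(1/2):ℝ) := Real.rpow_pos_of_pos ht _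
  nlinarith [h0', h1', h3', hrtpos, hpi2, hpi4]

lemma abs_int_le (g : ℝ → ℝ) (hg : Continuous g) (ν : ℝ) :
    |∫ θ in (0:ℝ)..π, g θ * sin (ν*θ)| ≤ ∫ θ in (0:ℝ)..π, |g θ| := by
  have h1 : |∫ θ in (0:ℝ)..π, g θ * sin (ν*θ)| ≤ ∫ θ in (0:ℝ)..π, |g θ * sin (ν*θ)| :=
    intervalIntegral.abs_integral_le_integral_abs pi_pos.le
  refine h1.trans ?_
  apply intervalIntegral.integral_mono_on pi_pos.le
  · exact ((hg.mul (by fun_prop)).abs).intervalIntegrable 0 π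
  · exact hg.abs.intervalIntegrable 0 π
  · intro θ _
    rw [abs_mul]
    calc |g θ| * |sin (ν*θ)| ≤ |g θ| * 1 :=
        mul_le_mul_of_nonneg_left (abs_sin_le_one _) (abs_nonneg _)
      _ = |g θ| := mul_one _

lemma boundA (t : ℝ) (ht : 0 < t) (n : ℕ) :
    |heatKernel1 t ((n:ℤ)+1) - heatKernel1 t n| ≤ 1/(2*t) := by
  rw [hrepr t n]
  rw [abs_mul, abs_mul]
  have h1 := abs_int_le (hh t) (cont_hh t) ((n:ℝ)+1/2)
  have h2 := ihh t ht
  have hint_nonneg : 0 ≤ ∫ θ in (0:ℝ)..π, |hh t θ| :=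
    intervalIntegral.integral_nonneg pi_pos.le (fun θ _ => abs_nonneg _)
  have e1 : |(-(2/π) : ℝ)| = 2/π := by
    rw [abs_neg, abs_of_pos (by positivity)]
  have e2 : |exp (-2*t)| = exp (-2*t) := abs_of_pos (exp_pos _)
  rw [e1, e2]
  calc 2/π * exp (-2*t) * |∫ θ in (0:ℝ)..π, hh t θ * sin (((n:ℝ)+1/2)*θ)|
      ≤ 2/π * exp (-2*t) * ∫ θ in (0:ℝ)..π, |hh t θ| := by
        apply mul_le_mul_of_nonneg_left h1 (by positivity)
    _ = 2/π * (exp (-2*t) * ∫ θ in (0:ℝ)..π, |hh t θ|) := by ring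
    _ ≤ 2/π * (π^2/(16*t)) := mul_le_mul_of_nonneg_left h2 (by positivity)
    _ = π/(8*t) := by field_simp; ring
    _ ≤ 1/(2*t) := by
        rw [div_le_div_iff₀ (by positivity) (by positivity)]
        nlinarith [Real.pi_lt_d2, ht]

lemma boundB (t : ℝ) (ht : 0 < t) (n : ℕ) :
    |heatKernel1 t ((n:ℤ)+1) - heatKernel1 t n| ≤ 4/((n:ℝ)+1)^2 * (t^(-(1/2):ℝ) + 13) := by
  rw [hrepr t n, ibp t n]
  rw [abs_mul, abs_mul, abs_mul]
  have h1 := abs_int_le (hh2 t) (cont_hh2 t) ((n:ℝ)+1/2)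
  have h2 := ihh2 t ht
  have e1 : |(-(2/π) : ℝ)| = 2/π := by rw [abs_neg, abs_of_pos (by positivity)]
  have e2 : |exp (-2*t)| = exp (-2*t) := abs_of_pos (exp_pos _)
  have e3 : |(-(1/((n:ℝ)+1/2)^2))| = 1/((n:ℝ)+1/2)^2 := by
    rw [abs_neg, abs_of_pos (by positivity)]
  rw [e1, e2, e3]
  have hrt : 0 < t^(-(1/2):ℝ) := Real.rpow_pos_of_pos ht _
  calc 2/π * exp (-2*t) * (1/((n:ℝ)+1/2)^2 * |∫ θ in (0:ℝ)..π, hh2 t θ * sin (((n:ℝ)+1/2)*θ)|)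
      ≤ 2/π * exp (-2*t) * (1/((n:ℝ)+1/2)^2 * ∫ θ in (0:ℝ)..π, |hh2 t θ|) := by
        apply mul_le_mul_of_nonneg_left (mul_le_mul_of_nonneg_left h1 (by positivity)) (by positivity)
    _ = 2/π * (1/((n:ℝ)+1/2)^2) * (exp (-2*t) * ∫ θ in (0:ℝ)..π, |hh2 t θ|) := by ring
    _ ≤ 2/π * (1/((n:ℝ)+1/2)^2) * (t^(-(1/2):ℝ) + 13) :=
        mul_le_mul_of_nonneg_left h2 (by positivity)
    _ ≤ 4/((n:ℝ)+1)^2 * (t^(-(1/2):ℝ) + 13) := by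
        apply mul_le_mul_of_nonneg_right _ (by positivity)
        have hpg3 := Real.pi_gt_three
        have hn : (0:ℝ) ≤ (n:ℝ) := Nat.cast_nonneg n
        rw [show (2:ℝ)/π * (1/((n:ℝ)+1/2)^2) = 2/(π*((n:ℝ)+1/2)^2) by rw [div_mul_div_comm, mul_one]]
        rw [div_le_div_iff₀ (by positivity) (by positivity)]
        nlinarith [sq_nonneg ((n:ℝ)+1), sq_nonneg (n:ℝ)]

lemma besselIZ_neg (m : ℤ) (t : ℝ) : besselIZ (-m) t = besselIZ m t := by
  unfold besselIZ
  congr 1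
  apply intervalIntegral.integral_congr
  intro θ _
  push_cast
  rw [neg_mul, Real.cos_neg]

lemma hK_symm (t : ℝ) (n : ℤ) : heatKernel1 t (-n) = heatKernel1 t n := by
  unfold heatKernel1
  rw [besselIZ_neg]

lemma f_antisymm (t : ℝ) (n : ℕ) :
    heatKernel1 t ((-(n:ℤ)-1) + 1) - heatKernel1 t (-(n:ℤ)-1)
      = -(heatKernel1 t ((n:ℤ)+1) - heatKernel1 t n) := by
  have e1 : (-(n:ℤ)-1) + 1 = -(n:ℤ) := by ring
  have e2 : (-(n:ℤ)-1) = -((n:ℤ)+1) := by ring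
  rw [e1, e2, hK_symm, hK_symm]
  ring

lemma rt_inv {t : ℝ} (ht : 0 < t) : t^(-(1/2):ℝ) = (Real.sqrt t)⁻¹ := by
  rw [Real.rpow_neg ht.le, ← Real.sqrt_eq_rpow]

lemma boundA' (t : ℝ) (ht : 0 < t) (n : ℤ) :
    |heatKernel1 t (n+1) - heatKernel1 t n| ≤ 1/(2*t) := by
  cases n with
  | ofNat m => exact boundA t ht m
  | negSucc m =>
      have e : (Int.negSucc m) = -(m:ℤ)-1 := by
        rw [Int.negSucc_eq]; ring
      rw [e, f_antisymm, abs_neg]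
      exact boundA t ht m

lemma tel (N : ℕ) (hN : 0 < N) :
    ∑' n:ℕ, ENNReal.ofReal (1/(((n:ℝ)+(N:ℝ))*(((n:ℝ)+(N:ℝ))+1)))
      ≤ ENNReal.ofReal (1/(N:ℝ)) := by
  rw [ENNReal.tsum_eq_iSup_sum]
  apply iSup_le
  intro s
  obtain ⟨m, hs⟩ := s.exists_nat_subset_range
  have h1 : ∑ i ∈ s, ENNReal.ofReal (1/(((i:ℝ)+(N:ℝ))*(((i:ℝ)+(N:ℝ))+1)))
      ≤ ∑ i ∈ Finset.range m, ENNReal.ofReal (1/(((i:ℝ)+(N:ℝ))*(((i:ℝ)+(N:ℝ))+1))) :=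
    Finset.sum_le_sum_of_subset hs
  refine h1.trans ?_
  rw [← ENNReal.ofReal_sum_of_nonneg (fun i _ => by positivity)]
  apply ENNReal.ofReal_le_ofReal
  have hNpos : (0:ℝ) < N := by exact_mod_cast hN
  have hterm : ∀ i:ℕ, 1/(((i:ℝ)+(N:ℝ))*(((i:ℝ)+(N:ℝ))+1))
      = 1/((i:ℝ)+(N:ℝ)) - 1/(((i+1:ℕ):ℝ)+(N:ℝ)) := by
    intro i
    have hi : (0:ℝ) < (i:ℝ)+(N:ℝ) := by positivity
    push_cast
    rw [div_sub_div _ _ (by positivity) (by positivity)]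
    rw [div_eq_div_iff (by positivity) (by positivity)]
    ring
  calc ∑ i ∈ Finset.range m, 1/(((i:ℝ)+(N:ℝ))*(((i:ℝ)+(N:ℝ))+1))
      = ∑ i ∈ Finset.range m, (1/((i:ℝ)+(N:ℝ)) - 1/(((i+1:ℕ):ℝ)+(N:ℝ))) := by
        apply Finset.sum_congr rfl; intro i _; exact hterm i
    _ = 1/(((0:ℕ):ℝ)+(N:ℝ)) - 1/(((m:ℕ):ℝ)+(N:ℝ)) :=
        Finset.sum_range_sub' (fun i => 1/((i:ℝ)+(N:ℝ))) m
    _ ≤ 1/(N:ℝ) := by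
        have : (0:ℝ) ≤ 1/(((m:ℕ):ℝ)+(N:ℝ)) := by positivity
        simp only [Nat.cast_zero, zero_add]
        linarith

set_option maxHeartbeats 1000000 in
lemma sumNat (t : ℝ) (ht : 0 < t) :
    ∑' n:ℕ, ENNReal.ofReal |heatKernel1 t ((n:ℤ)+1) - heatKernel1 t n|
      ≤ ENNReal.ofReal (112 * t^(-(1/2):ℝ)) := by
  have hrt : 0 < t^(-(1/2):ℝ) := Real.rpow_pos_of_pos ht _
  rcases le_or_gt t 1 with hle | hgt
  · -- t ≤ 1
    have hb : ∀ n:ℕ, ENNReal.ofReal |heatKernel1 t ((n:ℤ)+1) - heatKernel1 t n|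
        ≤ ENNReal.ofReal (8*(t^(-(1/2):ℝ)+13)) * ENNReal.ofReal (1/(((n:ℝ)+1)*(((n:ℝ)+1)+1))) := by
      intro n
      rw [← ENNReal.ofReal_mul (by positivity)]
      apply ENNReal.ofReal_le_ofReal
      refine (boundB t ht n).trans ?_
      rw [show (8:ℝ)*(t^(-(1/2):ℝ)+13) * (1/(((n:ℝ)+1)*(((n:ℝ)+1)+1)))
        = 8/(((n:ℝ)+1)*(((n:ℝ)+2))) * (t^(-(1/2):ℝ)+13) by ring]
      apply mul_le_mul_of_nonneg_right _ (by positivity)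
      rw [div_le_div_iff₀ (by positivity) (by positivity)]
      have hn : (0:ℝ) ≤ (n:ℝ) := Nat.cast_nonneg n
      nlinarith
    calc ∑' n:ℕ, ENNReal.ofReal |heatKernel1 t ((n:ℤ)+1) - heatKernel1 t n|
        ≤ ∑' n:ℕ, ENNReal.ofReal (8*(t^(-(1/2):ℝ)+13)) * ENNReal.ofReal (1/(((n:ℝ)+1)*(((n:ℝ)+1)+1))) :=
          ENNReal.tsum_le_tsum hb
      _ = ENNReal.ofReal (8*(t^(-(1/2):ℝ)+13)) * ∑' n:ℕ, ENNReal.ofReal (1/(((n:ℝ)+1)*(((n:ℝ)+1)+1))) :=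
          ENNReal.tsum_mul_left
      _ ≤ ENNReal.ofReal (8*(t^(-(1/2):ℝ)+13)) * ENNReal.ofReal (1/((1:ℕ):ℝ)) := by
          apply mul_le_mul_right ((le_of_eq (by norm_num)).trans (tel 1 one_pos))
          -- fix below
      _ ≤ ENNReal.ofReal (112 * t^(-(1/2):ℝ)) := by
          rw [← ENNReal.ofReal_mul (by positivity)]
          apply ENNReal.ofReal_le_ofReal
          have h1 : (1:ℝ) ≤ t^(-(1/2):ℝ) := by
            rw [rt_inv ht]
            rw [le_inv_comm₀ one_pos (Real.sqrt_pos.mpr ht)]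
            simpa using Real.sqrt_le_sqrt hle
          norm_num
          nlinarith
  · -- 1 < t
    set N : ℕ := ⌈Real.sqrt t⌉₊ with hNdef
    have hst0 : (0:ℝ) < Real.sqrt t := Real.sqrt_pos.mpr ht
    have hst1 : (1:ℝ) ≤ Real.sqrt t := by
      rw [show (1:ℝ) = Real.sqrt 1 by simp]
      exact Real.sqrt_le_sqrt hgt.le
    have hNge : Real.sqrt t ≤ (N:ℝ) := Nat.le_ceil _
    have hNle : (N:ℝ) ≤ 2*Real.sqrt t := by
      have := Nat.ceil_lt_add_one hst0.le
      linarith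
    have hN1 : 0 < N := by
      exact Nat.ceil_pos.mpr hst0
    have hrtle : t^(-(1/2):ℝ) ≤ 1 := by
      rw [rt_inv ht]
      rw [inv_le_one_iff₀]
      right; exact hst1
    rw [← Summable.sum_add_tsum_nat_add' (f := fun n:ℕ => ENNReal.ofReal
      |heatKernel1 t ((n:ℤ)+1) - heatKernel1 t n|) (k := N) ENNReal.summable]
    have hhead : ∑ i ∈ Finset.range N, ENNReal.ofReal |heatKernel1 t ((i:ℤ)+1) - heatKernel1 t i|
        ≤ ENNReal.ofReal (t^(-(1/2):ℝ)) := by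
      calc ∑ i ∈ Finset.range N, ENNReal.ofReal |heatKernel1 t ((i:ℤ)+1) - heatKernel1 t i|
          ≤ ∑ _i ∈ Finset.range N, ENNReal.ofReal (1/(2*t)) :=
            Finset.sum_le_sum (fun i _ => ENNReal.ofReal_le_ofReal (boundA t ht i))
        _ = N * ENNReal.ofReal (1/(2*t)) := by
            rw [Finset.sum_const, Finset.card_range, nsmul_eq_mul]
        _ = ENNReal.ofReal ((N:ℝ) * (1/(2*t))) := by
            rw [ENNReal.ofReal_mul (by positivity), ENNReal.ofReal_natCast]
        _ ≤ ENNReal.ofReal (t^(-(1/2):ℝ)) := by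
            apply ENNReal.ofReal_le_ofReal
            rw [rt_inv ht]
            calc (N:ℝ) * (1/(2*t)) ≤ (2*Real.sqrt t) * (1/(2*t)) := by
                  apply mul_le_mul_of_nonneg_right hNle (by positivity)
              _ = (Real.sqrt t)⁻¹ := by
                  have hss := Real.mul_self_sqrt ht.le
                  field_simp
                  linarith [hss]
    have htail : ∑' i:ℕ, ENNReal.ofReal |heatKernel1 t (((i+N:ℕ):ℤ)+1) - heatKernel1 t ((i+N:ℕ):ℤ)|
        ≤ ENNReal.ofReal (56 * t^(-(1/2):ℝ)) := by
      have hb : ∀ i:ℕ, ENNReal.ofReal |heatKernel1 t (((i+N:ℕ):ℤ)+1) - heatKernel1 t ((i+N:ℕ):ℤ)|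
          ≤ ENNReal.ofReal 56 * ENNReal.ofReal (1/(((i:ℝ)+(N:ℝ))*(((i:ℝ)+(N:ℝ))+1))) := by
        intro i
        rw [← ENNReal.ofReal_mul (by norm_num)]
        apply ENNReal.ofReal_le_ofReal
        refine (boundB t ht (i+N)).trans ?_
        have hcast : ((i+N:ℕ):ℝ) = (i:ℝ)+(N:ℝ) := by push_cast; ring
        rw [hcast]
        have hx : (1:ℝ) ≤ (i:ℝ)+(N:ℝ) := by
          have : (1:ℝ) ≤ (N:ℝ) := by exact_mod_cast hN1
          have : (0:ℝ) ≤ (i:ℝ) := Nat.cast_nonneg i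
          linarith
        calc 4/(((i:ℝ)+(N:ℝ))+1)^2 * (t^(-(1/2):ℝ) + 13)
            ≤ 4/(((i:ℝ)+(N:ℝ))+1)^2 * 14 := by
              apply mul_le_mul_of_nonneg_left (by linarith) (by positivity)
          _ ≤ 56 * (1/(((i:ℝ)+(N:ℝ))*(((i:ℝ)+(N:ℝ))+1))) := by
              rw [show (56:ℝ) * (1/(((i:ℝ)+(N:ℝ))*(((i:ℝ)+(N:ℝ))+1)))
                = 56/(((i:ℝ)+(N:ℝ))*(((i:ℝ)+(N:ℝ))+1)) by ring,
                show (4:ℝ)/(((i:ℝ)+(N:ℝ))+1)^2 * 14 = 56/((((i:ℝ)+(N:ℝ))+1)^2) by ring]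
              rw [div_le_div_iff₀ (by positivity) (by positivity)]
              nlinarith
      calc ∑' i:ℕ, ENNReal.ofReal |heatKernel1 t (((i+N:ℕ):ℤ)+1) - heatKernel1 t ((i+N:ℕ):ℤ)|
          ≤ ∑' i:ℕ, ENNReal.ofReal 56 * ENNReal.ofReal (1/(((i:ℝ)+(N:ℝ))*(((i:ℝ)+(N:ℝ))+1))) :=
            ENNReal.tsum_le_tsum hb
        _ = ENNReal.ofReal 56 * ∑' i:ℕ, ENNReal.ofReal (1/(((i:ℝ)+(N:ℝ))*(((i:ℝ)+(N:ℝ))+1))) :=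
            ENNReal.tsum_mul_left
        _ ≤ ENNReal.ofReal 56 * ENNReal.ofReal (1/(N:ℝ)) := mul_le_mul_right (tel N hN1) _
        _ ≤ ENNReal.ofReal (56 * t^(-(1/2):ℝ)) := by
            rw [← ENNReal.ofReal_mul (by norm_num)]
            apply ENNReal.ofReal_le_ofReal
            rw [rt_inv ht]
            have h2 : (1:ℝ)/(N:ℝ) ≤ 1/(Real.sqrt t) :=
              one_div_le_one_div_of_le hst0 hNge
            calc 56*(1/(N:ℝ)) ≤ 56*(1/Real.sqrt t) := by linarith
              _ = 56*(Real.sqrt t)⁻¹ := by rw [one_div]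
    calc (∑ i ∈ Finset.range N, ENNReal.ofReal |heatKernel1 t ((i:ℤ)+1) - heatKernel1 t i|)
          + ∑' i:ℕ, ENNReal.ofReal |heatKernel1 t (((i+N:ℕ):ℤ)+1) - heatKernel1 t ((i+N:ℕ):ℤ)|
        ≤ ENNReal.ofReal (t^(-(1/2):ℝ)) + ENNReal.ofReal (56 * t^(-(1/2):ℝ)) :=
          add_le_add hhead htail
      _ = ENNReal.ofReal (57 * t^(-(1/2):ℝ)) := by
          rw [← ENNReal.ofReal_add (by positivity) (by positivity)]
          congr 1
          ring
      _ ≤ ENNReal.ofReal (112 * t^(-(1/2):ℝ)) := by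
          apply ENNReal.ofReal_le_ofReal
          nlinarith

lemma sumInt (t : ℝ) (ht : 0 < t) :
    ∑' n:ℤ, ENNReal.ofReal |heatKernel1 t (n+1) - heatKernel1 t n|
      ≤ ENNReal.ofReal (224 * t^(-(1/2):ℝ)) := by
  have hsplit := tsum_of_nat_of_neg_add_one
    (f := fun n:ℤ => ENNReal.ofReal |heatKernel1 t (n+1) - heatKernel1 t n|)
    ENNReal.summable ENNReal.summable
  rw [hsplit]
  have hneg : ∀ n:ℕ, ENNReal.ofReal |heatKernel1 t (-((n:ℤ)+1)+1) - heatKernel1 t (-((n:ℤ)+1))|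
      = ENNReal.ofReal |heatKernel1 t ((n:ℤ)+1) - heatKernel1 t n| := by
    intro n
    have e : -((n:ℤ)+1) = -(n:ℤ)-1 := by ring
    rw [e, f_antisymm, abs_neg]
  calc (∑' n:ℕ, ENNReal.ofReal |heatKernel1 t ((n:ℤ)+1) - heatKernel1 t n|)
        + ∑' n:ℕ, ENNReal.ofReal |heatKernel1 t (-((n:ℤ)+1)+1) - heatKernel1 t (-((n:ℤ)+1))|
      = (∑' n:ℕ, ENNReal.ofReal |heatKernel1 t ((n:ℤ)+1) - heatKernel1 t n|)
        + ∑' n:ℕ, ENNReal.ofReal |heatKernel1 t ((n:ℤ)+1) - heatKernel1 t n| := by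
        rw [tsum_congr hneg]
    _ ≤ ENNReal.ofReal (112 * t^(-(1/2):ℝ)) + ENNReal.ofReal (112 * t^(-(1/2):ℝ)) :=
        add_le_add (sumNat t ht) (sumNat t ht)
    _ = ENNReal.ofReal (224 * t^(-(1/2):ℝ)) := by
        rw [← ENNReal.ofReal_add (by positivity) (by positivity)]
        ring_nf

lemma step4 {t p : ℝ} (ht : 0 < t) (hp : 1 ≤ p) :
    ((1/(2*t))^(p-1) * (224*t^(-(1/2):ℝ)))^(1/p) ≤ 224 * t^(-(1/2:ℝ) - (1 - 1/p)/2) := by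
  have hp0 : 0 < p := by linarith
  have hq0 : 0 ≤ p - 1 := by linarith
  have h2t : (1/(2*t)) = (1/2) * t^(-(1:ℝ)) := by rw [Real.rpow_neg_one]; ring
  have hrw : ((1/(2*t))^(p-1) * (224*t^(-(1/2):ℝ)))
      = (1/2)^(p-1) * (224 * ((t^(-(1:ℝ)))^(p-1) * t^(-(1/2):ℝ))) := by
    rw [h2t, Real.mul_rpow (by norm_num) (Real.rpow_nonneg ht.le _)]
    ring
  rw [hrw]
  have hpow : (t^(-(1:ℝ)))^(p-1) * t^(-(1/2):ℝ) = t^(-(p-1) - (1/2)) := by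
    rw [← Real.rpow_mul ht.le, ← Real.rpow_add ht]
    congr 1
    ring
  rw [hpow]
  have hA : ((1/2:ℝ)^(p-1))^(1/p) ≤ 1 := by
    apply Real.rpow_le_one (Real.rpow_nonneg (by norm_num) _) _ (by positivity)
    exact Real.rpow_le_one (by norm_num) (by norm_num) hq0
  have hB : (224:ℝ)^(1/p) ≤ 224 := by
    calc (224:ℝ)^(1/p) ≤ (224:ℝ)^(1:ℝ) := by
          apply Real.rpow_le_rpow_of_exponent_le (by norm_num)
          rw [div_le_one hp0]; linarith
      _ = 224 := Real.rpow_one _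
  have hC : (t^(-(p-1) - (1/2:ℝ)))^(1/p) = t^(-(1/2:ℝ) - (1 - 1/p)/2) := by
    rw [← Real.rpow_mul ht.le]
    congr 1
    field_simp
    ring
  calc ((1/2:ℝ)^(p-1) * (224 * t^(-(p-1) - (1/2:ℝ))))^(1/p)
      = ((1/2:ℝ)^(p-1))^(1/p) * ((224:ℝ)^(1/p) * (t^(-(p-1) - (1/2:ℝ)))^(1/p)) := by
        rw [Real.mul_rpow (Real.rpow_nonneg (by norm_num) _) (by positivity),
          Real.mul_rpow (by norm_num) (Real.rpow_nonneg ht.le _)]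
    _ ≤ 1 * ((224:ℝ) * (t^(-(p-1) - (1/2:ℝ)))^(1/p)) := by
        apply mul_le_mul hA _ (by positivity) (by norm_num)
        apply mul_le_mul_of_nonneg_right hB (by positivity)
    _ = 224 * t^(-(1/2:ℝ) - (1 - 1/p)/2) := by rw [one_mul, hC]

/-- `ℓ^r` estimate for the forward difference of the one-dimensional heat kernel. -/
theorem stmt12 (r : ℝ≥0∞) (hr : 1 ≤ r) :
    ∃ C : ℝ, 0 < C ∧ ∀ t : ℝ, 0 < t →
      lpNorm r (fun n : ℤ => heatKernel1 t (n + 1) - heatKernel1 t n) ≤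
        ENNReal.ofReal (C * t ^ (-(1 / 2 : ℝ) - (1 - (r⁻¹).toReal) / 2)) := by
  refine ⟨224, by norm_num, ?_⟩
  intro t ht
  by_cases hrtop : r = ∞
  · subst hrtop
    rw [lpNorm, if_pos rfl]
    have he : (-(1 / 2 : ℝ) - (1 - ((⊤:ℝ≥0∞)⁻¹).toReal) / 2) = (-1 : ℝ) := by
      simp
      norm_num
    rw [he]
    apply iSup_le
    intro n
    rw [← enorm_eq_nnnorm, Real.enorm_eq_ofReal_abs]
    apply ENNReal.ofReal_le_ofReal
    refine (boundA' t ht n).trans ?_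
    rw [Real.rpow_neg_one]
    rw [div_le_iff₀ (by positivity)]
    rw [show (224:ℝ) * t⁻¹ * (2*t) = 448 * (t⁻¹ * t) by ring, inv_mul_cancel₀ ht.ne']
    norm_num
  · rw [lpNorm, if_neg hrtop]
    set p : ℝ := r.toReal with hpdef
    have hp1 : 1 ≤ p := by
      rw [hpdef, show (1:ℝ) = (1:ℝ≥0∞).toReal by simp]
      exact ENNReal.toReal_mono hrtop hr
    have hp0 : 0 < p := by linarith
    have hinv : (r⁻¹).toReal = 1/p := by
      rw [ENNReal.toReal_inv, hpdef, one_div]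
    rw [hinv]
    have hpt : ∀ n : ℤ, (‖heatKernel1 t (n+1) - heatKernel1 t n‖₊ : ℝ≥0∞) ^ p
        ≤ ENNReal.ofReal ((1/(2*t))^(p-1)) *
            ENNReal.ofReal |heatKernel1 t (n+1) - heatKernel1 t n| := by
      intro n
      rw [← enorm_eq_nnnorm, Real.enorm_eq_ofReal_abs,
        ENNReal.ofReal_rpow_of_nonneg (abs_nonneg _) hp0.le,
        ← ENNReal.ofReal_mul (by positivity)]
      apply ENNReal.ofReal_le_ofReal
      set x : ℝ := |heatKernel1 t (n+1) - heatKernel1 t n| with hxdef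
      have hx0 : 0 ≤ x := abs_nonneg _
      rcases eq_or_lt_of_le hx0 with h0 | hpos
      · rw [← h0, Real.zero_rpow hp0.ne']
        positivity
      · have hxb : x ≤ 1/(2*t) := boundA' t ht n
        calc x ^ p = x^(p-1) * x := by
              rw [← Real.rpow_add_one hpos.ne' (p-1)]
              norm_num
          _ ≤ (1/(2*t))^(p-1) * x := by
              apply mul_le_mul_of_nonneg_right _ hx0
              exact Real.rpow_le_rpow hx0 hxb (by linarith)
    have hsum : (∑' n:ℤ, (‖heatKernel1 t (n+1) - heatKernel1 t n‖₊ : ℝ≥0∞) ^ p)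
        ≤ ENNReal.ofReal ((1/(2*t))^(p-1) * (224 * t^(-(1/2):ℝ))) := by
      calc (∑' n:ℤ, (‖heatKernel1 t (n+1) - heatKernel1 t n‖₊ : ℝ≥0∞) ^ p)
          ≤ ∑' n:ℤ, ENNReal.ofReal ((1/(2*t))^(p-1)) *
              ENNReal.ofReal |heatKernel1 t (n+1) - heatKernel1 t n| :=
            ENNReal.tsum_le_tsum hpt
        _ = ENNReal.ofReal ((1/(2*t))^(p-1)) *
              ∑' n:ℤ, ENNReal.ofReal |heatKernel1 t (n+1) - heatKernel1 t n| :=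
            ENNReal.tsum_mul_left
        _ ≤ ENNReal.ofReal ((1/(2*t))^(p-1)) * ENNReal.ofReal (224 * t^(-(1/2):ℝ)) :=
            mul_le_mul_right (sumInt t ht) _
        _ = ENNReal.ofReal ((1/(2*t))^(p-1) * (224 * t^(-(1/2):ℝ))) := by
            rw [← ENNReal.ofReal_mul (by positivity)]
    calc (∑' n:ℤ, (‖heatKernel1 t (n+1) - heatKernel1 t n‖₊ : ℝ≥0∞) ^ p) ^ (1/p)
        ≤ (ENNReal.ofReal ((1/(2*t))^(p-1) * (224 * t^(-(1/2):ℝ)))) ^ (1/p) :=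
          ENNReal.rpow_le_rpow hsum (by positivity)
      _ = ENNReal.ofReal (((1/(2*t))^(p-1) * (224 * t^(-(1/2):ℝ)))^(1/p)) := by
          rw [ENNReal.ofReal_rpow_of_nonneg (by positivity) (by positivity)]
      _ ≤ ENNReal.ofReal (224 * t ^ (-(1 / 2 : ℝ) - (1 - 1/p) / 2)) :=
          ENNReal.ofReal_le_ofReal (step4 ht hp1)
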